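/- For all d ≥ 1, M > 0 and q > 1/α, the cardinality of the index set 𝒜_d(M) = {h ∈ ℤ^d : r(h) ≤ M} satisfies |𝒜_d(M)| ≤ M^q ∑_{𝔲 ⊆ {1,...,d}} [2ζ(αq)]^{|𝔲|} γ_𝔲^q. -/

import Mathlib

/-- The zeta function value `ζ(x) = ∑_{k ≥ 1} k^{-x}`. -/
noncomputable def zetaR (x : ℝ) : ℝ := ∑' k : ℕ, ((k : ℝ) + 1) ^ (-x)

section helpers

lemma zetaR_summable {s : ℝ} (hs : 1 < s) : Summable (fun k : ℕ => ((k : ℝ) + 1) ^ (-s)) := by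
  have h : Summable (fun n : ℕ => (n : ℝ) ^ (-s)) := Real.summable_nat_rpow.2 (by linarith)
  have := (summable_nat_add_iff 1).2 h
  simpa using this

lemma zetaR_nonneg {s : ℝ} : 0 ≤ zetaR s :=
  tsum_nonneg fun k => Real.rpow_nonneg (by positivity) _

lemma sum_pos_le_zetaR {s : ℝ} (hs : 1 < s) (F : Finset ℤ) (hF : ∀ k ∈ F, 0 < k) :
    ∑ k ∈ F, ((k.natAbs : ℝ)) ^ (-s) ≤ zetaR s := by
  have key : ∑ k ∈ F, ((k.natAbs : ℝ)) ^ (-s)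
      = ∑ n ∈ F.image (fun k : ℤ => k.natAbs - 1), ((n : ℝ) + 1) ^ (-s) := by
    rw [Finset.sum_image]
    · apply Finset.sum_congr rfl
      intro k hk
      have := hF k hk
      have h1 : 1 ≤ k.natAbs := by omega
      congr 1
      push_cast [Nat.cast_sub h1]
      ring
    · intro a ha b hb hab
      have ha' := hF a ha; have hb' := hF b hb
      simp only at hab
      omega
  rw [key]
  exact Summable.sum_le_tsum _ (fun i _ => Real.rpow_nonneg (by positivity) _) (zetaR_summable hs)

lemma sum_le_two_zetaR {s : ℝ} (hs : 1 < s) (F : Finset ℤ) (hF : ∀ k ∈ F, k ≠ 0) :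
    ∑ k ∈ F, ((k.natAbs : ℝ)) ^ (-s) ≤ 2 * zetaR s := by
  classical
  have hsplit : F = F.filter (0 < ·) ∪ F.filter (· < 0) := by
    ext k; simp only [Finset.mem_union, Finset.mem_filter]
    constructor
    · intro hk; have := hF k hk; rcases lt_or_gt_of_ne this with h | h
      · right; exact ⟨hk, h⟩
      · left; exact ⟨hk, h⟩
    · rintro (⟨h, _⟩ | ⟨h, _⟩) <;> exact h
  have hdisj : Disjoint (F.filter (0 < ·)) (F.filter (· < 0)) := by
    rw [Finset.disjoint_left]
    intro k hk hk'
    simp only [Finset.mem_filter] at hk hk'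
    omega
  rw [hsplit, Finset.sum_union hdisj]
  have h1 : ∑ k ∈ F.filter (0 < ·), ((k.natAbs : ℝ)) ^ (-s) ≤ zetaR s :=
    sum_pos_le_zetaR hs _ (fun k hk => (Finset.mem_filter.1 hk).2)
  have h2 : ∑ k ∈ F.filter (· < 0), ((k.natAbs : ℝ)) ^ (-s) ≤ zetaR s := by
    have : ∑ k ∈ F.filter (· < 0), ((k.natAbs : ℝ)) ^ (-s)
        = ∑ k ∈ (F.filter (· < 0)).image (fun k => -k), ((k.natAbs : ℝ)) ^ (-s) := by
      rw [Finset.sum_image (by intro a _ b _ h; simpa using h)]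
      simp
    rw [this]
    apply sum_pos_le_zetaR hs
    intro k hk
    simp only [Finset.mem_image, Finset.mem_filter] at hk
    obtain ⟨a, ⟨_, ha⟩, rfl⟩ := hk
    omega
  linarith

lemma sum_prod_le_prod_sum {d : ℕ} (u : Finset (Fin d)) (T : Finset (Fin d → ℤ))
    (hsupp : ∀ h ∈ T, ∀ j, j ∉ u → h j = 0)
    (f : ℤ → ℝ) (hf : ∀ k, 0 ≤ f k) :
    ∑ h ∈ T, ∏ j ∈ u, f (h j) ≤ ∏ j ∈ u, ∑ k ∈ T.image (fun h => h j), f k := by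
  classical
  rw [Finset.prod_sum]
  have key : ∑ h ∈ T, ∏ j ∈ u, f (h j)
      = ∑ p ∈ T.image (fun h => (fun j (_ : j ∈ u) => h j)), ∏ x ∈ u.attach, f (p x.1 x.2) := by
    rw [Finset.sum_image]
    · apply Finset.sum_congr rfl
      intro h _
      rw [← Finset.prod_attach u (fun j => f (h j))]
    · intro a ha b hb hab
      funext j
      by_cases hj : j ∈ u
      · exact congrFun (congrFun hab j) hj
      · rw [hsupp a ha j hj, hsupp b hb j hj]
  rw [key]
  apply Finset.sum_le_sum_of_subset_of_nonneg
  · intro p hp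
    simp only [Finset.mem_image] at hp
    obtain ⟨h, hh, rfl⟩ := hp
    rw [Finset.mem_pi]
    intro j hj
    exact Finset.mem_image_of_mem _ hh
  · intro p _ _
    exact Finset.prod_nonneg fun x _ => hf _

end helpers

/-- Cardinality bound for the index set `𝒜_d(M) = {h ∈ ℤ^d : r(h) ≤ M}`:
for all `d ≥ 1`, `M > 0` and `q > 1/α`,
`|𝒜_d(M)| ≤ M^q ∑_{𝔲 ⊆ {1:d}} [2ζ(αq)]^{|𝔲|} γ_𝔲^q`. -/
theorem index_set_cardinality_bound (d : ℕ) (hd : 1 ≤ d) (α M q : ℝ)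
    (hα : 1 < α) (hM : 0 < M) (hq : 1 / α < q)
    (γ : Finset (Fin d) → ℝ) (hγ : ∀ u, 0 < γ u) (hγe : γ ∅ = 1)
    (r : (Fin d → ℤ) → ℝ)
    (hr : ∀ h, r h = (γ (Finset.univ.filter fun j => h j ≠ 0))⁻¹ *
        ∏ j ∈ Finset.univ.filter (fun j => h j ≠ 0), ((h j).natAbs : ℝ) ^ α) :
    {h : Fin d → ℤ | r h ≤ M}.Finite ∧
    (({h : Fin d → ℤ | r h ≤ M}.ncard : ℝ)
      ≤ M ^ q * ∑ u : Finset (Fin d), (2 * zetaR (α * q)) ^ u.card * γ u ^ q) := by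
  classical
  have hα0 : (0 : ℝ) < α := by linarith
  have hq0 : 0 < q := lt_trans (by positivity) hq
  set s := α * q with hs_def
  have hs : 1 < s := by
    have := mul_lt_mul_of_pos_left hq hα0
    rwa [mul_one_div, div_self (ne_of_gt hα0)] at this
  -- positivity of r
  have hrpos : ∀ h : Fin d → ℤ, 0 < r h := by
    intro h
    rw [hr h]
    apply mul_pos (inv_pos.2 (hγ _))
    apply Finset.prod_pos
    intro j hj
    simp only [Finset.mem_filter] at hj
    apply Real.rpow_pos_of_pos
    have : (h j).natAbs ≠ 0 := Int.natAbs_ne_zero.2 hj.2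
    positivity
  -- finiteness
  set G : ℝ := Finset.univ.sup' (Finset.univ_nonempty) γ with hG
  have hGle : ∀ u, γ u ≤ G := fun u => Finset.le_sup' γ (Finset.mem_univ u)
  have hG0 : 0 < G := lt_of_lt_of_le (hγ ∅) (hGle ∅)
  set B : ℝ := (M * G) ^ (1 / α) with hB
  set N : ℕ := ⌈B⌉₊ with hN
  have hfin : {h : Fin d → ℤ | r h ≤ M}.Finite := by
    apply Set.Finite.subset (Set.Finite.pi (t := fun _ : Fin d => {k : ℤ | k.natAbs ≤ N})
      (fun i => Set.Finite.subset (Set.finite_Icc (-(N : ℤ)) N) (by intro k hk; simp only [Set.mem_setOf_eq] at hk; simp only [Set.mem_Icc]; omega)))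
    intro h hh
    simp only [Set.mem_setOf_eq] at hh
    rw [Set.mem_pi]
    intro j _
    simp only [Set.mem_setOf_eq]
    by_cases hj : h j = 0
    · simp [hj]
    · -- j is in the support; its factor is bounded
      have hmem : j ∈ Finset.univ.filter (fun i => h i ≠ 0) := by
        simp [hj]
      have hfac1 : ∀ i ∈ Finset.univ.filter (fun i => h i ≠ 0),
          (1 : ℝ) ≤ ((h i).natAbs : ℝ) ^ α := by
        intro i hi
        simp only [Finset.mem_filter] at hi
        have : (1:ℕ) ≤ (h i).natAbs := by
          have := Int.natAbs_ne_zero.2 hi.2; omega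
        have h1 : (1:ℝ) ≤ ((h i).natAbs : ℝ) := by exact_mod_cast this
        calc (1:ℝ) = 1 ^ α := (Real.one_rpow α).symm
          _ ≤ ((h i).natAbs : ℝ) ^ α := Real.rpow_le_rpow (by norm_num) h1 hα0.le
      have hprod : ((h j).natAbs : ℝ) ^ α
          ≤ ∏ i ∈ Finset.univ.filter (fun i => h i ≠ 0), ((h i).natAbs : ℝ) ^ α := by
        have herase : (1:ℝ) ≤ ∏ i ∈ (Finset.univ.filter (fun i => h i ≠ 0)).erase j,
            ((h i).natAbs : ℝ) ^ α := by
          calc (1:ℝ) = ∏ _i ∈ (Finset.univ.filter (fun i => h i ≠ 0)).erase j, (1:ℝ) := by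
                rw [Finset.prod_const_one]
            _ ≤ _ := Finset.prod_le_prod (fun i _ => by norm_num)
                (fun i hi => hfac1 i (Finset.mem_of_mem_erase hi))
        rw [← Finset.mul_prod_erase _ _ hmem]
        exact le_mul_of_one_le_right (Real.rpow_nonneg (by positivity) _) herase
      have hPle : ∏ i ∈ Finset.univ.filter (fun i => h i ≠ 0), ((h i).natAbs : ℝ) ^ α
          ≤ M * γ (Finset.univ.filter (fun i => h i ≠ 0)) := by
        have := hh
        rw [hr h] at this
        set γu := γ (Finset.univ.filter (fun i => h i ≠ 0))
        have hγu := hγ (Finset.univ.filter (fun i => h i ≠ 0))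
        calc ∏ i ∈ Finset.univ.filter (fun i => h i ≠ 0), ((h i).natAbs : ℝ) ^ α
            = γu * (γu⁻¹ * ∏ i ∈ Finset.univ.filter (fun i => h i ≠ 0), ((h i).natAbs : ℝ) ^ α) := by
              rw [← mul_assoc, mul_inv_cancel₀ (ne_of_gt hγu : γu ≠ 0), one_mul]
          _ ≤ γu * M := by
              apply mul_le_mul_of_nonneg_left this hγu.le
          _ = M * γu := mul_comm _ _
      have hMG : ((h j).natAbs : ℝ) ^ α ≤ M * G := by
        calc ((h j).natAbs : ℝ) ^ α ≤ M * γ _ := le_trans hprod hPle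
          _ ≤ M * G := mul_le_mul_of_nonneg_left (hGle _) hM.le
      have habs : ((h j).natAbs : ℝ) ≤ B := by
        have h1 : (((h j).natAbs : ℝ) ^ α) ^ (1/α) ≤ (M * G) ^ (1/α) :=
          Real.rpow_le_rpow (Real.rpow_nonneg (by positivity) _) hMG (by positivity)
        rwa [← Real.rpow_mul (by positivity), mul_one_div, div_self (ne_of_gt hα0),
          Real.rpow_one] at h1
      have : ((h j).natAbs : ℝ) ≤ (N : ℝ) := le_trans habs (Nat.le_ceil B)
      exact_mod_cast this
  refine ⟨hfin, ?_⟩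
  -- the cardinality bound
  set S : Finset (Fin d → ℤ) := hfin.toFinset with hS
  have hcard : {h : Fin d → ℤ | r h ≤ M}.ncard = S.card := by
    rw [hS, Set.ncard_eq_toFinset_card _ hfin]
  have hmemS : ∀ h, h ∈ S ↔ r h ≤ M := by
    intro h; rw [hS, Set.Finite.mem_toFinset]; rfl
  rw [hcard]
  -- per-element bound: 1 ≤ M^q * (r h)^(-q)
  have hstep1 : (S.card : ℝ) ≤ ∑ h ∈ S, M ^ q * (r h) ^ (-q) := by
    calc (S.card : ℝ) = ∑ _h ∈ S, (1:ℝ) := by simp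
      _ ≤ ∑ h ∈ S, M ^ q * (r h) ^ (-q) := by
          apply Finset.sum_le_sum
          intro h hh
          have hrM : r h ≤ M := (hmemS h).1 hh
          have hrp := hrpos h
          have hqq : (r h) ^ q ≤ M ^ q := Real.rpow_le_rpow hrp.le hrM hq0.le
          rw [Real.rpow_neg hrp.le, ← div_eq_mul_inv, le_div_iff₀ (Real.rpow_pos_of_pos hrp q), one_mul]
          exact hqq
  -- rewrite (r h)^(-q)
  have hrw : ∀ h : Fin d → ℤ, (r h) ^ (-q)
      = γ (Finset.univ.filter fun j => h j ≠ 0) ^ q *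
        ∏ j ∈ Finset.univ.filter (fun j => h j ≠ 0), ((h j).natAbs : ℝ) ^ (-s) := by
    intro h
    rw [hr h]
    set u := Finset.univ.filter (fun j => h j ≠ 0) with hu
    have hfac : ∀ j ∈ u, (0:ℝ) < ((h j).natAbs : ℝ) ^ α := by
      intro j hj
      simp only [hu, Finset.mem_filter] at hj
      have : (h j).natAbs ≠ 0 := Int.natAbs_ne_zero.2 hj.2
      apply Real.rpow_pos_of_pos; positivity
    have hPpos : (0:ℝ) < ∏ j ∈ u, ((h j).natAbs : ℝ) ^ α := Finset.prod_pos hfac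
    rw [Real.mul_rpow (inv_nonneg.2 (hγ u).le) hPpos.le]
    congr 1
    · rw [Real.inv_rpow (hγ u).le, Real.rpow_neg (hγ u).le, inv_inv]
    · rw [← Real.finset_prod_rpow u _ (fun j hj => (hfac j hj).le) (-q)]
      apply Finset.prod_congr rfl
      intro j hj
      rw [← Real.rpow_mul (by positivity), mul_neg, hs_def]
  -- sum over supports
  have hstep2 : ∑ h ∈ S, M ^ q * (r h) ^ (-q)
      = M ^ q * ∑ u : Finset (Fin d), ∑ h ∈ S.filter (fun h => Finset.univ.filter (fun j => h j ≠ 0) = u),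
          γ (Finset.univ.filter fun j => h j ≠ 0) ^ q *
          ∏ j ∈ Finset.univ.filter (fun j => h j ≠ 0), ((h j).natAbs : ℝ) ^ (-s) := by
    rw [← Finset.mul_sum]
    congr 1
    rw [Finset.sum_fiberwise S (fun h => Finset.univ.filter (fun j => h j ≠ 0))]
    exact Finset.sum_congr rfl fun h _ => hrw h
  have hstep3 : ∀ u : Finset (Fin d),
      ∑ h ∈ S.filter (fun h => Finset.univ.filter (fun j => h j ≠ 0) = u),
          γ (Finset.univ.filter fun j => h j ≠ 0) ^ q *
          ∏ j ∈ Finset.univ.filter (fun j => h j ≠ 0), ((h j).natAbs : ℝ) ^ (-s)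
      ≤ (2 * zetaR s) ^ u.card * γ u ^ q := by
    intro u
    set T := S.filter (fun h => Finset.univ.filter (fun j => h j ≠ 0) = u) with hT
    have hTmem : ∀ h ∈ T, Finset.univ.filter (fun j => h j ≠ 0) = u := by
      intro h hh; exact (Finset.mem_filter.1 hh).2
    have heq : ∑ h ∈ T, γ (Finset.univ.filter fun j => h j ≠ 0) ^ q *
          ∏ j ∈ Finset.univ.filter (fun j => h j ≠ 0), ((h j).natAbs : ℝ) ^ (-s)
        = γ u ^ q * ∑ h ∈ T, ∏ j ∈ u, ((h j).natAbs : ℝ) ^ (-s) := by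
      rw [Finset.mul_sum]
      apply Finset.sum_congr rfl
      intro h hh
      rw [hTmem h hh]
    rw [heq]
    have hsum : ∑ h ∈ T, ∏ j ∈ u, ((h j).natAbs : ℝ) ^ (-s) ≤ (2 * zetaR s) ^ u.card := by
      have h1 := sum_prod_le_prod_sum u T
        (by
          intro h hh j hj
          have := hTmem h hh
          by_contra hne
          have : j ∈ Finset.univ.filter (fun j => h j ≠ 0) := by simp [hne]
          rw [hTmem h hh] at this
          exact hj this)
        (fun k => ((k.natAbs : ℝ)) ^ (-s)) (fun k => Real.rpow_nonneg (by positivity) _)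
      refine le_trans h1 ?_
      calc ∏ j ∈ u, ∑ k ∈ T.image (fun h => h j), ((k.natAbs : ℝ)) ^ (-s)
          ≤ ∏ _j ∈ u, (2 * zetaR s) := by
            apply Finset.prod_le_prod
            · intro j _
              exact Finset.sum_nonneg fun k _ => Real.rpow_nonneg (by positivity) _
            · intro j hj
              apply sum_le_two_zetaR hs
              intro k hk
              simp only [Finset.mem_image] at hk
              obtain ⟨h, hh, rfl⟩ := hk
              have := hTmem h hh
              have hjmem : j ∈ Finset.univ.filter (fun j => h j ≠ 0) := by rw [this]; exact hj
              simpa using (Finset.mem_filter.1 hjmem).2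
        _ = (2 * zetaR s) ^ u.card := by rw [Finset.prod_const]
    calc γ u ^ q * ∑ h ∈ T, ∏ j ∈ u, ((h j).natAbs : ℝ) ^ (-s)
        ≤ γ u ^ q * (2 * zetaR s) ^ u.card :=
          mul_le_mul_of_nonneg_left hsum (Real.rpow_nonneg (hγ u).le q)
      _ = (2 * zetaR s) ^ u.card * γ u ^ q := mul_comm _ _
  calc (S.card : ℝ) ≤ ∑ h ∈ S, M ^ q * (r h) ^ (-q) := hstep1
    _ = M ^ q * ∑ u : Finset (Fin d), _ := hstep2
    _ ≤ M ^ q * ∑ u : Finset (Fin d), (2 * zetaR s) ^ u.card * γ u ^ q := by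
        apply mul_le_mul_of_nonneg_left _ (Real.rpow_nonneg hM.le q)
        exact Finset.sum_le_sum fun u _ => hstep3 u
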